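/- Let X = (a/2·(x²−y²) + bx + c)∂_x + (ax+b)y·∂_y on the upper half-plane and let ω be its dual 1-form with respect to the hyperbolic metric (dx²+dy²)/y². Then the Lie derivative of ω along X vanishes: L_X ω = 0. -/

import Mathlib

/-- Components of the soliton vector field on the upper half-plane. -/
noncomputable def VX1 (a b c x y : ℝ) : ℝ := a / 2 * (x ^ 2 - y ^ 2) + b * x + c
noncomputable def VX2 (a b x y : ℝ) : ℝ := (a * x + b) * y

/-- Components of its dual 1-form `ω = (X¹/y²)dx + (X²/y²)dy` w.r.t. `g=(dx²+dy²)/y²`. -/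
noncomputable def Pw (a b c x y : ℝ) : ℝ := VX1 a b c x y / y ^ 2
noncomputable def Qw (a b x y : ℝ) : ℝ := VX2 a b x y / y ^ 2

/-- `i_X ω = ω(X)`. -/
noncomputable def fXw (a b c x y : ℝ) : ℝ :=
  Pw a b c x y * VX1 a b c x y + Qw a b x y * VX2 a b x y

/-- The coefficient of `dω = R dx∧dy`. -/
noncomputable def Rw (a b c x y : ℝ) : ℝ :=
  deriv (fun x' => Qw a b x' y) x - deriv (fun y' => Pw a b c x y') y

lemma hVX1x (a b c x y : ℝ) : HasDerivAt (fun x' => VX1 a b c x' y) (a * x + b) x := by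
  unfold VX1
  have := ((((hasDerivAt_pow 2 x).sub_const (y^2)).const_mul (a/2)).add
      ((hasDerivAt_id x).const_mul b)).add_const c
  refine this.congr_deriv ?_; norm_num; ring

lemma hVX1y (a b c x y : ℝ) : HasDerivAt (fun y' => VX1 a b c x y') (-(a * y)) y := by
  unfold VX1
  have := ((((hasDerivAt_const y (x^2)).sub (hasDerivAt_pow 2 y)).const_mul (a/2)).add
      (hasDerivAt_const y (b*x))).add_const c
  refine this.congr_deriv ?_; norm_num; ring

lemma hVX2x (a b x y : ℝ) : HasDerivAt (fun x' => VX2 a b x' y) (a * y) x := by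
  unfold VX2
  have := HasDerivAt.mul_const (((hasDerivAt_id x).const_mul a).add_const b) y
  refine this.congr_deriv ?_; ring

lemma hVX2y (a b x y : ℝ) : HasDerivAt (fun y' => VX2 a b x y') (a * x + b) y := by
  unfold VX2
  have : HasDerivAt (fun y' : ℝ => (a * x + b) * y') ((a*x+b) * 1) y :=
    (hasDerivAt_id y).const_mul (a*x+b)
  convert this using 1; ring

lemma hy2 (y : ℝ) : HasDerivAt (fun y' : ℝ => y' ^ 2) (2 * y) y := by
  have := hasDerivAt_pow 2 y
  refine this.congr_deriv ?_; ring

lemma hQwx (a b x y : ℝ) : HasDerivAt (fun x' => Qw a b x' y) (a * y / y ^ 2) x := by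
  unfold Qw
  exact (hVX2x a b x y).div_const _

lemma hPwy (a b c x y : ℝ) (hy : y ≠ 0) :
    HasDerivAt (fun y' => Pw a b c x y')
      ((-(a * y) * y ^ 2 - VX1 a b c x y * (2 * y)) / (y ^ 2) ^ 2) y := by
  unfold Pw
  exact (hVX1y a b c x y).div (hy2 y) (pow_ne_zero 2 hy)

lemma hfXwx (a b c x y : ℝ) (hy : y ≠ 0) :
    HasDerivAt (fun x' => fXw a b c x' y)
      (((a*x+b) / y^2 * VX1 a b c x y + Pw a b c x y * (a*x+b)) +
        (a*y / y^2 * VX2 a b x y + Qw a b x y * (a*y))) x := by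
  unfold fXw Pw Qw
  exact (((hVX1x a b c x y).div_const _).mul (hVX1x a b c x y)).add
    (((hVX2x a b x y).div_const _).mul (hVX2x a b x y))

lemma hfXwy (a b c x y : ℝ) (hy : y ≠ 0) :
    HasDerivAt (fun y' => fXw a b c x y')
      ((((-(a*y)) * y^2 - VX1 a b c x y * (2*y)) / (y^2)^2 * VX1 a b c x y
          + Pw a b c x y * (-(a*y))) +
        (((a*x+b) * y^2 - VX2 a b x y * (2*y)) / (y^2)^2 * VX2 a b x y
          + Qw a b x y * (a*x+b))) y := by
  unfold fXw Pw Qw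
  exact ((((hVX1y a b c x y).div (hy2 y) (pow_ne_zero 2 hy)).mul (hVX1y a b c x y)).add
    (((hVX2y a b x y).div (hy2 y) (pow_ne_zero 2 hy)).mul (hVX2y a b x y)))

/-- `L_X ω = 0` on the upper half-plane, by Cartan's formula `L_X ω = d(i_X ω) + i_X(dω)`:
both the `dx`-component `∂_x(ω(X)) − R·X²` and the `dy`-component `∂_y(ω(X)) + R·X¹`
vanish. -/
theorem stmt2 (a b c : ℝ) (x y : ℝ) (hy : 0 < y) :
    deriv (fun x' => fXw a b c x' y) x - Rw a b c x y * VX2 a b x y = 0 ∧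
    deriv (fun y' => fXw a b c x y') y + Rw a b c x y * VX1 a b c x y = 0 := by
  have hy0 : y ≠ 0 := ne_of_gt hy
  have h1 := (hfXwx a b c x y hy0).deriv
  have h2 := (hfXwy a b c x y hy0).deriv
  have h3 := (hQwx a b x y).deriv
  have h4 := (hPwy a b c x y hy0).deriv
  rw [Rw, h1, h2, h3, h4]
  unfold Pw Qw VX1 VX2
  constructor <;> (field_simp; ring)
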